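/- Let G be a finite simple graph with no connected component isomorphic to K₂, at most one isolated vertex, and such that G is not isomorphic to K_{1,m} for any m. Then Dist′(μ(G)) ≤ Dist′(G). -/

import Mathlib

open SimpleGraph

universe u

/-- A distinguishing edge coloring: no nontrivial automorphism preserves the coloring. -/
def IsDistEdgeColoring {V : Type u} (G : SimpleGraph V) {C : Type*} (c : G.edgeSet → C) : Prop :=
  ∀ φ : G ≃g G, (∀ e : G.edgeSet, c (φ.mapEdgeSet e) = c e) → ∀ v, φ v = v

/-- The distinguishing index: least number of colors in a distinguishing edge coloring. -/
noncomputable def distIndex {V : Type u} (G : SimpleGraph V) : ℕ :=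
  sInf {k : ℕ | ∃ c : G.edgeSet → Fin k, IsDistEdgeColoring G c}

/-- The star `K_{1,m}` with center `0`. -/
def starGraph (m : ℕ) : SimpleGraph (Fin (m + 1)) :=
  SimpleGraph.fromRel fun a _ => a = 0

/-- The Mycielskian: `Sum.inl a` are original vertices, `Sum.inr (Sum.inl a)` their
shadows, and `Sum.inr (Sum.inr _)` the root. -/
def myc {V : Type u} (G : SimpleGraph V) : SimpleGraph (V ⊕ V ⊕ PUnit.{u+1}) :=
  SimpleGraph.fromRel fun x y =>
    match x, y with
    | Sum.inl a, Sum.inl b => G.Adj a b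
    | Sum.inl a, Sum.inr (Sum.inl b) => G.Adj a b
    | Sum.inr (Sum.inl _), Sum.inr (Sum.inr _) => True
    | _, _ => False

/-- The generalized Mycielskian with `t` extra levels: `Sum.inl (j, a)` is the level-`j`
copy of vertex `a` (level `0` being the original vertices), and `Sum.inr _` is the root. -/
def genMyc {V : Type u} (G : SimpleGraph V) (t : ℕ) :
    SimpleGraph ((Fin (t + 1) × V) ⊕ PUnit.{u+1}) :=
  SimpleGraph.fromRel fun x y =>
    match x, y with
    | Sum.inl (j, a), Sum.inl (k, b) =>
        ((j.val = 0 ∧ k.val = 0) ∨ k.val = j.val + 1) ∧ G.Adj a b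
    | Sum.inl (j, _), Sum.inr _ => j.val = t
    | _, _ => False

set_option linter.unusedSectionVars false

namespace MycAux

section Part1
variable {V : Type u} {G : SimpleGraph V}

abbrev L (a : V) : V ⊕ V ⊕ PUnit.{u+1} := Sum.inl a
abbrev M (a : V) : V ⊕ V ⊕ PUnit.{u+1} := Sum.inr (Sum.inl a)
abbrev W (V : Type u) : V ⊕ V ⊕ PUnit.{u+1} := Sum.inr (Sum.inr PUnit.unit)

@[simp] lemma adj_LL {a b : V} : (myc G).Adj (L a) (L b) ↔ G.Adj a b := by
  simp only [myc, fromRel_adj]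
  constructor
  · rintro ⟨-, h | h⟩; exact h; exact h.symm
  · intro h; exact ⟨by simp [h.ne], Or.inl h⟩

@[simp] lemma adj_LM {a b : V} : (myc G).Adj (L a) (M b) ↔ G.Adj a b := by
  simp only [myc, fromRel_adj]
  constructor
  · rintro ⟨-, h | h⟩; exact h; exact h.elim
  · intro h; exact ⟨by simp, Or.inl h⟩

@[simp] lemma adj_ML {a b : V} : (myc G).Adj (M a) (L b) ↔ G.Adj b a := by
  simp only [myc, fromRel_adj]
  constructor
  · rintro ⟨-, h | h⟩; exact h.elim; exact h
  · intro h; exact ⟨by simp, Or.inr h⟩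

@[simp] lemma adj_MM {a b : V} : ¬ (myc G).Adj (M a) (M b) := by
  simp only [myc, fromRel_adj]
  rintro ⟨-, h | h⟩ <;> exact h

@[simp] lemma adj_MW {a : V} : (myc G).Adj (M a) (W V) := by
  simp only [myc, fromRel_adj]
  exact ⟨by simp, Or.inl trivial⟩

@[simp] lemma adj_WM {a : V} : (myc G).Adj (W V) (M a) := adj_MW.symm

@[simp] lemma adj_LW {a : V} : ¬ (myc G).Adj (L a) (W V) := by
  simp only [myc, fromRel_adj]
  rintro ⟨-, h | h⟩ <;> exact h

@[simp] lemma adj_WL {a : V} : ¬ (myc G).Adj (W V) (L a) := fun h => adj_LW h.symm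

@[simp] lemma adj_WW : ¬ (myc G).Adj (W V) (W V) := (myc G).irrefl

lemma vert_cases (z : V ⊕ V ⊕ PUnit.{u+1}) :
    (∃ a, z = L a) ∨ (∃ a, z = M a) ∨ z = W V := by
  rcases z with a | a | u
  · exact Or.inl ⟨a, rfl⟩
  · exact Or.inr (Or.inl ⟨a, rfl⟩)
  · exact Or.inr (Or.inr (by cases u; rfl))

lemma eq_M_of_adj_W {z : V ⊕ V ⊕ PUnit.{u+1}} (h : (myc G).Adj z (W V)) :
    ∃ a, z = M a := by
  rcases vert_cases z with ⟨a, rfl⟩ | ⟨a, rfl⟩ | rfl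
  · exact absurd h adj_LW
  · exact ⟨a, rfl⟩
  · exact absurd h adj_WW

/-- neighbors of the root are exactly the shadows -/
noncomputable def eW : V ≃ ((myc G).neighborSet (W V)) :=
  Equiv.ofBijective (fun a => ⟨M a, by simp [mem_neighborSet]⟩)
    ⟨fun a b h => by simpa using Subtype.ext_iff.mp h,
     by
      rintro ⟨z, hz⟩
      obtain ⟨a, rfl⟩ := eq_M_of_adj_W ((mem_neighborSet _ _ _).mp hz).symm
      exact ⟨a, rfl⟩⟩

noncomputable def eL (q : V) :
    (G.neighborSet q ⊕ G.neighborSet q) ≃ ((myc G).neighborSet (L q)) :=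
  Equiv.ofBijective
    (fun x => match x with
      | Sum.inl ⟨b, hb⟩ => ⟨L b, by simpa [mem_neighborSet] using hb⟩
      | Sum.inr ⟨b, hb⟩ => ⟨M b, by simpa [mem_neighborSet] using hb⟩)
    ⟨by
      rintro (⟨b, hb⟩ | ⟨b, hb⟩) (⟨c, hc⟩ | ⟨c, hc⟩) h <;>
        simp_all [Subtype.ext_iff],
     by
      rintro ⟨z, hz⟩
      rw [mem_neighborSet] at hz
      rcases vert_cases z with ⟨a, rfl⟩ | ⟨a, rfl⟩ | rfl
      · exact ⟨Sum.inl ⟨a, by simpa using hz⟩, rfl⟩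
      · exact ⟨Sum.inr ⟨a, by simpa using hz⟩, rfl⟩
      · exact absurd hz adj_LW⟩

noncomputable def eM (x : V) :
    Option (G.neighborSet x) ≃ ((myc G).neighborSet (M x)) :=
  Equiv.ofBijective
    (fun o => match o with
      | none => ⟨W V, by simp [mem_neighborSet]⟩
      | some ⟨b, hb⟩ => ⟨L b, by simpa [mem_neighborSet] using hb.symm⟩)
    ⟨by
      rintro (_ | ⟨b, hb⟩) (_ | ⟨c, hc⟩) h <;> simp_all [Subtype.ext_iff],
     by
      rintro ⟨z, hz⟩
      rw [mem_neighborSet] at hz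
      rcases vert_cases z with ⟨a, rfl⟩ | ⟨a, rfl⟩ | rfl
      · exact ⟨some ⟨a, ((by simpa using hz : G.Adj a x).symm)⟩, rfl⟩
      · exact absurd hz.symm adj_MM
      · exact ⟨none, rfl⟩⟩

variable [Fintype V] [DecidableRel G.Adj]

lemma ncard_nbr_W : Nat.card ((myc G).neighborSet (W V)) = Fintype.card V := by
  rw [← Nat.card_congr (eW (G := G)), Nat.card_eq_fintype_card]

lemma ncard_nbr_L (q : V) :
    Nat.card ((myc G).neighborSet (L q)) = 2 * G.degree q := by
  rw [← Nat.card_congr (eL (G := G) q), Nat.card_sum, Nat.card_eq_fintype_card,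
    card_neighborSet_eq_degree, two_mul]

lemma ncard_nbr_M (x : V) :
    Nat.card ((myc G).neighborSet (M x)) = G.degree x + 1 := by
  rw [← Nat.card_congr (eM (G := G) x), Nat.card_eq_fintype_card, Fintype.card_option,
    card_neighborSet_eq_degree]

lemma ncard_map (ψ : myc G ≃g myc G) (z : V ⊕ V ⊕ PUnit.{u+1}) :
    Nat.card ((myc G).neighborSet (ψ z)) = Nat.card ((myc G).neighborSet z) :=
  (Nat.card_congr (ψ.mapNeighborSet z)).symm

lemma starGraph_adj {m : ℕ} {i j : Fin (m+1)} :
    (_root_.starGraph m).Adj i j ↔ i ≠ j ∧ (i = 0 ∨ j = 0) := by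
  simp only [_root_.starGraph, fromRel_adj]

lemma star_contra {G : SimpleGraph V} [Fintype V] [DecidableRel G.Adj] (x : V) (hdeg : Fintype.card V = G.degree x + 1)
    (hind : ∀ a b, G.Adj x a → G.Adj x b → ¬ G.Adj a b)
    (hstar : ∀ m : ℕ, IsEmpty (G ≃g _root_.starGraph m)) : False := by
  classical
  have key : ∀ b, b ≠ x → G.Adj x b := by
    intro b hb
    have h1 : G.neighborFinset x ⊆ Finset.univ.erase x := fun c hc =>
      Finset.mem_erase.mpr ⟨((G.mem_neighborFinset x c).mp hc).ne', Finset.mem_univ _⟩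
    have h2 : (Finset.univ.erase x).card ≤ (G.neighborFinset x).card := by
      rw [card_neighborFinset_eq_degree, Finset.card_erase_of_mem (Finset.mem_univ x),
        Finset.card_univ, hdeg]
      simp
    have heq := Finset.eq_of_subset_of_card_le h1 h2
    have : b ∈ Finset.univ.erase x := Finset.mem_erase.mpr ⟨hb, Finset.mem_univ _⟩
    rw [← heq, G.mem_neighborFinset] at this
    exact this
  have hchar : ∀ a b, G.Adj a b ↔ a ≠ b ∧ (a = x ∨ b = x) := by
    intro a b
    constructor
    · intro hab
      refine ⟨hab.ne, ?_⟩
      by_contra hc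
      push_neg at hc
      exact hind a b (key a hc.1) (key b hc.2) hab
    · rintro ⟨hne, rfl | rfl⟩
      · exact key b (fun h => hne h.symm)
      · exact (key a hne).symm
  set m := G.degree x with hm
  have e : V ≃ Fin (m + 1) := Fintype.equivFinOfCardEq (by rw [hdeg])
  set e' : V ≃ Fin (m + 1) := e.trans (Equiv.swap (e x) 0) with he'
  have hex : e' x = 0 := by simp [he', Equiv.swap_apply_left]
  have hinj : Function.Injective e' := e'.injective
  have iso : G ≃g _root_.starGraph m := by
    refine ⟨e', ?_⟩
    intro a b
    rw [starGraph_adj, hchar a b]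
    constructor
    · rintro ⟨hne, h0⟩
      refine ⟨fun h => hne (congrArg e' h), ?_⟩
      rcases h0 with h0 | h0
      · exact Or.inl (hinj (by rw [h0, hex]))
      · exact Or.inr (hinj (by rw [h0, hex]))
    · rintro ⟨hne, h0⟩
      refine ⟨fun h => hne (hinj h), ?_⟩
      rcases h0 with rfl | rfl
      · exact Or.inl hex
      · exact Or.inr hex
  exact (hstar m).false iso

end Part1

section Part2
variable {V : Type u} {G : SimpleGraph V} [Fintype V] [DecidableRel G.Adj]

lemma no_M (ψ : myc G ≃g myc G) (x : V) (h : ψ (W V) = M x)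
    (hstar : ∀ m : ℕ, IsEmpty (G ≃g _root_.starGraph m)) : False := by
  have hsymmMx : ψ.symm (M x) = W V := by rw [← h, RelIso.symm_apply_apply]
  have hdeg : Fintype.card V = G.degree x + 1 := by
    have := ncard_map ψ (W V)
    rw [h, ncard_nbr_M, ncard_nbr_W (G := G)] at this
    exact this.symm
  refine star_contra x hdeg (fun a b hxa hxb hab => ?_) hstar
  have pa : (myc G).Adj (ψ.symm (L a)) (W V) := by
    have := ψ.symm.map_adj_iff.mpr (adj_LM.mpr hxa.symm)
    rwa [hsymmMx] at this
  have pb : (myc G).Adj (ψ.symm (L b)) (W V) := by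
    have := ψ.symm.map_adj_iff.mpr (adj_LM.mpr hxb.symm)
    rwa [hsymmMx] at this
  obtain ⟨a', ha'⟩ := eq_M_of_adj_W pa
  obtain ⟨b', hb'⟩ := eq_M_of_adj_W pb
  have : (myc G).Adj (M a') (M b') := by
    rw [← ha', ← hb']
    exact ψ.symm.map_adj_iff.mpr (adj_LL.mpr hab)
  exact adj_MM this

lemma no_L (ψ : myc G ≃g myc G) (p q : V) (hp : ψ (W V) = L p) (hq : ψ (L q) = W V)
    (hK2 : ∀ x y : V, G.Adj x y → ¬(G.degree x = 1 ∧ G.degree y = 1)) : False := by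
  classical
  have n2 : Fintype.card V = 2 * G.degree q := by
    have := ncard_map ψ (L q)
    rw [hq, ncard_nbr_W (G := G), ncard_nbr_L] at this
    exact this
  have hWp : ψ.symm (L p) = W V := by rw [← hp, RelIso.symm_apply_apply]
  have dq : 0 < G.degree q := by
    by_contra hd
    push_neg at hd
    interval_cases h : G.degree q
    · have : Fintype.card V = 0 := by omega
      exact (Fintype.card_pos_iff.mpr ⟨q⟩).ne' this
  obtain ⟨b0, hb0⟩ := G.degree_pos_iff_exists_adj q |>.mp dq
  have hM : ∀ b, G.Adj q b → ∃ b', ψ (L b) = M b' := by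
    intro b hb
    have : (myc G).Adj (ψ (L b)) (W V) := by
      have := ψ.map_adj_iff.mpr (adj_LL.mpr hb.symm)
      rwa [hq] at this
    exact eq_M_of_adj_W this
  have hMq : ∃ c, ψ (M q) = L c := by
    have hadj : (myc G).Adj (ψ (M q)) (L p) := by
      have := ψ.map_adj_iff.mpr (adj_MW (a := q))
      rwa [hp] at this
    rcases vert_cases (ψ (M q)) with ⟨c, hc⟩ | ⟨c, hc⟩ | hc
    · exact ⟨c, hc⟩
    · obtain ⟨b0', hb0'⟩ := hM b0 hb0
      have : (myc G).Adj (M b0') (M c) := by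
        rw [← hb0', ← hc]
        exact ψ.map_adj_iff.mpr (adj_LM.mpr hb0.symm)
      exact absurd this adj_MM
    · have : M q = L q := ψ.injective (by rw [hc, hq])
      exact absurd this (by simp)
  obtain ⟨c, hc⟩ := hMq
  have hsymmc : ψ.symm (L c) = M q := by rw [← hc, RelIso.symm_apply_apply]
  have hNcp : ∀ c', G.Adj c c' → c' = p := by
    intro c' hcc'
    have hadj : (myc G).Adj (ψ.symm (L c')) (M q) := by
      have := ψ.symm.map_adj_iff.mpr (adj_LL.mpr hcc'.symm)
      rwa [hsymmc] at this
    rcases vert_cases (ψ.symm (L c')) with ⟨b, hb⟩ | ⟨b, hb⟩ | hb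
    · rw [hb] at hadj
      have hbq : G.Adj q b := (adj_LM.mp hadj).symm
      obtain ⟨b', hb'⟩ := hM b hbq
      have : L c' = M b' := by
        rw [← hb']
        have := congrArg ψ hb
        rwa [RelIso.apply_symm_apply] at this
      simp at this
    · rw [hb] at hadj
      exact absurd hadj adj_MM
    · have : L c' = L p := by
        have := congrArg ψ hb
        rwa [RelIso.apply_symm_apply, hp] at this
      exact Sum.inl.inj this
  have huniq : ∀ b, G.Adj q b → ψ (L b) = M p := by
    intro b hb
    obtain ⟨b', hb'⟩ := hM b hb
    have hcb' : G.Adj c b' := by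
      have : (myc G).Adj (M b') (L c) := by
        rw [← hb', ← hc]
        exact ψ.map_adj_iff.mpr (adj_LM.mpr hb.symm)
      exact adj_ML.mp this
    rw [hb', hNcp b' hcb']
  have hbuniq : ∀ b, G.Adj q b → b = b0 := by
    intro b hb
    have : ψ (L b) = ψ (L b0) := by rw [huniq b hb, huniq b0 hb0]
    exact Sum.inl.inj (ψ.injective this)
  have hdq1 : G.degree q = 1 := by
    rw [← card_neighborFinset_eq_degree, Finset.card_eq_one]
    exact ⟨b0, Finset.eq_singleton_iff_unique_mem.mpr
      ⟨(G.mem_neighborFinset q b0).mpr hb0,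
       fun b hbmem => hbuniq b ((G.mem_neighborFinset q b).mp hbmem)⟩⟩
  have hcard2 : Fintype.card V = 2 := by rw [n2, hdq1]
  have hdb0 : G.degree b0 = 1 := by
    have h1 : 0 < G.degree b0 := (G.degree_pos_iff_exists_adj b0).mpr ⟨q, hb0.symm⟩
    have h2 : G.degree b0 < 2 := hcard2 ▸ G.degree_lt_card_verts b0
    omega
  exact hK2 q b0 hb0 ⟨hdq1, hdb0⟩

lemma fix_W (ψ : myc G ≃g myc G)
    (hK2 : ∀ x y : V, G.Adj x y → ¬(G.degree x = 1 ∧ G.degree y = 1))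
    (hstar : ∀ m : ℕ, IsEmpty (G ≃g _root_.starGraph m)) : ψ (W V) = W V := by
  rcases vert_cases (ψ (W V)) with ⟨p, hp⟩ | ⟨x, hx⟩ | h
  · exfalso
    rcases vert_cases (ψ.symm (W V)) with ⟨q, hq⟩ | ⟨z, hz⟩ | hz
    · refine no_L ψ p q hp ?_ hK2
      have := congrArg ψ hq
      rw [RelIso.apply_symm_apply] at this
      exact this.symm
    · exact no_M ψ.symm z hz hstar
    · have := congrArg ψ hz
      rw [RelIso.apply_symm_apply] at this
      rw [hp] at this
      simp at this
  · exact absurd (no_M ψ x hx hstar) not_false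
  · exact h

end Part2

section Part3
variable {V : Type u} {G : SimpleGraph V} {k : ℕ}

lemma mapEdgeSet_val {α : Type*} {H : SimpleGraph α} (φ : H ≃g H) {x y : α}
    (h : s(x, y) ∈ H.edgeSet) :
    ((φ.mapEdgeSet ⟨s(x, y), h⟩ : H.edgeSet) : Sym2 α) = s(φ x, φ y) := by
  simp [Iso.mapEdgeSet, Hom.mapEdgeSet, Sym2.map_pair_eq]

variable {V : Type u} {G : SimpleGraph V} {k : ℕ}

noncomputable def cbar (G : SimpleGraph V) (hk : 0 < k) (c : G.edgeSet → Fin k) :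
    Sym2 V → Fin k :=
  fun e => @dite _ (e ∈ G.edgeSet) (Classical.dec _) (fun h => c ⟨e, h⟩) (fun _ => ⟨0, hk⟩)

lemma cbar_adj {hk : 0 < k} {c : G.edgeSet → Fin k} {a b : V} (h : G.Adj a b) :
    cbar G hk c s(a, b) = c ⟨s(a, b), (G.mem_edgeSet).mpr h⟩ := dif_pos _

noncomputable def mycF (G : SimpleGraph V) (hk : 0 < k) (c : G.edgeSet → Fin k) :
    (V ⊕ V ⊕ PUnit.{u+1}) → (V ⊕ V ⊕ PUnit.{u+1}) → Fin k
  | Sum.inl a, Sum.inl b => cbar G hk c s(a, b)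
  | Sum.inl a, Sum.inr (Sum.inl b) => cbar G hk c s(a, b)
  | Sum.inr (Sum.inl a), Sum.inl b => cbar G hk c s(b, a)
  | _, _ => ⟨0, hk⟩

lemma mycF_symm (G : SimpleGraph V) (hk : 0 < k) (c : G.edgeSet → Fin k) :
    ∀ x y, mycF G hk c x y = mycF G hk c y x := by
  rintro (a | a | u) (b | b | u') <;> simp only [mycF] <;>
    first
      | rfl
      | rw [Sym2.eq_swap]

noncomputable def mycColor (G : SimpleGraph V) (hk : 0 < k) (c : G.edgeSet → Fin k) :
    (myc G).edgeSet → Fin k :=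
  fun e => Sym2.lift ⟨mycF G hk c, mycF_symm G hk c⟩ (e : Sym2 _)

lemma mycColor_mk {hk : 0 < k} {c : G.edgeSet → Fin k} (x y : V ⊕ V ⊕ PUnit.{u+1})
    (h : s(x, y) ∈ (myc G).edgeSet) :
    mycColor G hk c ⟨s(x, y), h⟩ = mycF G hk c x y := Sym2.lift_mk ..

variable [Fintype V] [DecidableRel G.Adj]

lemma stepB (hk : 0 < k) (c : G.edgeSet → Fin k) (hc : IsDistEdgeColoring G c)
    (φ : myc G ≃g myc G)
    (hφ : ∀ e, mycColor G hk c (φ.mapEdgeSet e) = mycColor G hk c e)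
    (hWφ : φ (W V) = W V) :
    ∃ τ : V → V, (∀ a, φ (L a) = L a) ∧ (∀ a, φ (M a) = M (τ a)) ∧
      (∀ a b, G.Adj a b → G.Adj a (τ b)) ∧
      (∀ a b (h : G.Adj a b) (h' : G.Adj a (τ b)),
        c ⟨s(a, τ b), (G.mem_edgeSet).mpr h'⟩ = c ⟨s(a, b), (G.mem_edgeSet).mpr h⟩) := by
  classical
  have hMM : ∀ a, ∃ b, φ (M a) = M b := by
    intro a
    refine eq_M_of_adj_W (G := G) ?_
    have := φ.map_adj_iff.mpr (adj_MW (G := G) (a := a))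
    rwa [hWφ] at this
  have hLL : ∀ a, ∃ b, φ (L a) = L b := by
    intro a
    rcases vert_cases (φ (L a)) with ⟨b, hb⟩ | ⟨b, hb⟩ | hb
    · exact ⟨b, hb⟩
    · exfalso
      have : (myc G).Adj (φ (L a)) (W V) := hb ▸ adj_MW
      rw [← hWφ] at this
      exact adj_LW (φ.map_adj_iff.mp this)
    · exfalso
      have : L a = W V := φ.injective (by rw [hb, hWφ])
      simp at this
  choose σ hσ using hLL
  choose τ hτ using hMM
  have hσinj : Function.Injective σ := by
    intro a b h
    have : φ (L a) = φ (L b) := by rw [hσ a, hσ b, h]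
    exact Sum.inl.inj (φ.injective this)
  let σE := Equiv.ofBijective σ (Finite.injective_iff_bijective.mp hσinj)
  let σIso : G ≃g G := ⟨σE, by
    intro a b
    show G.Adj (σ a) (σ b) ↔ G.Adj a b
    rw [← adj_LL (G := G), ← adj_LL (G := G) (a := a), ← hσ a, ← hσ b, φ.map_adj_iff]⟩
  have hσpres : ∀ e : G.edgeSet, c (σIso.mapEdgeSet e) = c e := by
    rintro ⟨e, he⟩
    induction e with
    | _ a b =>
      have hab : G.Adj a b := (G.mem_edgeSet).mp he
      have hab' : G.Adj (σ a) (σ b) := σIso.map_adj_iff.mpr hab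
      have hmap : σIso.mapEdgeSet ⟨s(a, b), he⟩ =
          ⟨s(σ a, σ b), (G.mem_edgeSet).mpr hab'⟩ :=
        Subtype.ext (by rw [mapEdgeSet_val]; rfl)
      rw [hmap]
      have hedge : s(L a, L b) ∈ (myc G).edgeSet :=
        ((myc G).mem_edgeSet).mpr (adj_LL.mpr hab)
      have hedge' : s(L (σ a), L (σ b)) ∈ (myc G).edgeSet :=
        ((myc G).mem_edgeSet).mpr (adj_LL.mpr hab')
      have h1 := hφ ⟨s(L a, L b), hedge⟩
      have hmap2 : φ.mapEdgeSet ⟨s(L a, L b), hedge⟩ = ⟨s(L (σ a), L (σ b)), hedge'⟩ :=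
        Subtype.ext (by rw [mapEdgeSet_val, hσ a, hσ b])
      rw [hmap2, mycColor_mk, mycColor_mk] at h1
      simp only [mycF] at h1
      rwa [cbar_adj hab, cbar_adj hab'] at h1
  have hσid : ∀ a, σ a = a := fun a => hc σIso hσpres a
  have hLid : ∀ a, φ (L a) = L a := fun a => by rw [hσ a, hσid a]
  have hAdjτ : ∀ a b, G.Adj a b → G.Adj a (τ b) := by
    intro a b h
    have : (myc G).Adj (φ (L a)) (φ (M b)) := φ.map_adj_iff.mpr (adj_LM.mpr h)
    rw [hLid a, hτ b] at this
    exact adj_LM.mp this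
  refine ⟨τ, hLid, hτ, hAdjτ, ?_⟩
  intro a b h h'
  have hedge : s(L a, M b) ∈ (myc G).edgeSet :=
    ((myc G).mem_edgeSet).mpr (adj_LM.mpr h)
  have hedge' : s(L a, M (τ b)) ∈ (myc G).edgeSet :=
    ((myc G).mem_edgeSet).mpr (adj_LM.mpr h')
  have h1 := hφ ⟨s(L a, M b), hedge⟩
  have hmap : φ.mapEdgeSet ⟨s(L a, M b), hedge⟩ = ⟨s(L a, M (τ b)), hedge'⟩ :=
    Subtype.ext (by rw [mapEdgeSet_val, hLid a, hτ b])
  rw [hmap, mycColor_mk, mycColor_mk] at h1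
  simp only [mycF] at h1
  rwa [cbar_adj h, cbar_adj h'] at h1

lemma mycDist
    (hK2 : ∀ x y : V, G.Adj x y → ¬(G.degree x = 1 ∧ G.degree y = 1))
    (hstar : ∀ m : ℕ, IsEmpty (G ≃g _root_.starGraph m))
    (hk : 0 < k) (c : G.edgeSet → Fin k) (hc : IsDistEdgeColoring G c) :
    IsDistEdgeColoring (myc G) (mycColor G hk c) := by
  intro φ hφ
  have hW := fix_W φ hK2 hstar
  obtain ⟨τ, hLid, hτ, hAdjτ, hcolτ⟩ := stepB hk c hc φ hφ hW
  have hφ' : ∀ e, mycColor G hk c (φ.symm.mapEdgeSet e) = mycColor G hk c e := by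
    intro e
    have h1 := hφ (φ.symm.mapEdgeSet e)
    rw [show φ.mapEdgeSet (φ.symm.mapEdgeSet e) = e from by
      rw [show φ.symm.mapEdgeSet = (φ.mapEdgeSet).symm from rfl]
      exact (φ.mapEdgeSet).apply_symm_apply e] at h1
    exact h1.symm
  have hWsymm : φ.symm (W V) = W V := by
    have h2 := RelIso.symm_apply_apply φ (W V)
    rwa [hW] at h2
  obtain ⟨τ₂, hLid₂, hτ₂, hAdjτ₂, -⟩ := stepB hk c hc φ.symm hφ' hWsymm
  have hττ₂ : ∀ a, τ₂ (τ a) = a := by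
    intro a
    have h1 := congrArg φ.symm (hτ a)
    rw [RelIso.symm_apply_apply, hτ₂ (τ a)] at h1
    exact (Sum.inl.inj (Sum.inr.inj h1)).symm
  have hNeq : ∀ a b, G.Adj a (τ b) ↔ G.Adj a b := by
    intro a b
    constructor
    · intro h
      have := hAdjτ₂ a (τ b) h
      rwa [hττ₂ b] at this
    · exact hAdjτ a b
  have hτinj : Function.Injective τ := by
    intro a b h
    have := congrArg τ₂ h
    rwa [hττ₂, hττ₂] at this
  let τE := Equiv.ofBijective τ (Finite.injective_iff_bijective.mp hτinj)
  let τIso : G ≃g G := ⟨τE, by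
    intro a b
    show G.Adj (τ a) (τ b) ↔ G.Adj a b
    rw [hNeq (τ a) b, G.adj_comm, hNeq b a, G.adj_comm]⟩
  have hτpres : ∀ e : G.edgeSet, c (τIso.mapEdgeSet e) = c e := by
    rintro ⟨e, he⟩
    induction e with
    | _ a b =>
      have hab : G.Adj a b := (G.mem_edgeSet).mp he
      have h1 : G.Adj (τ a) b := (G.adj_comm _ _).mp ((hNeq b a).mpr hab.symm)
      have h2 : G.Adj (τ a) (τ b) := (hNeq (τ a) b).mpr h1
      have hmap : τIso.mapEdgeSet ⟨s(a, b), he⟩ =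
          ⟨s(τ a, τ b), (G.mem_edgeSet).mpr h2⟩ :=
        Subtype.ext (by rw [mapEdgeSet_val]; rfl)
      rw [hmap]
      calc c ⟨s(τ a, τ b), (G.mem_edgeSet).mpr h2⟩
          = c ⟨s(τ a, b), (G.mem_edgeSet).mpr h1⟩ := hcolτ (τ a) b h1 h2
        _ = c ⟨s(b, τ a), (G.mem_edgeSet).mpr h1.symm⟩ := congrArg c (Subtype.ext Sym2.eq_swap)
        _ = c ⟨s(b, a), (G.mem_edgeSet).mpr hab.symm⟩ :=
            hcolτ b a hab.symm ((hNeq b a).mpr hab.symm)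
        _ = c ⟨s(a, b), he⟩ := congrArg c (Subtype.ext Sym2.eq_swap)
  have hτid : ∀ a, τ a = a := fun a => hc τIso hτpres a
  intro v
  rcases vert_cases v with ⟨a, rfl⟩ | ⟨a, rfl⟩ | rfl
  · exact hLid a
  · rw [hτ a, hτid a]
  · exact hW

end Part3

section Part4
variable {V : Type u} {G : SimpleGraph V} [Fintype V] [DecidableRel G.Adj]

lemma degree_congr (φ : G ≃g G) (v : V) : G.degree (φ v) = G.degree v := by
  rw [← card_neighborSet_eq_degree, ← card_neighborSet_eq_degree]
  exact (Fintype.card_congr (φ.mapNeighborSet v)).symm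

lemma exists_dist
    (hK2 : ∀ x y : V, G.Adj x y → ¬(G.degree x = 1 ∧ G.degree y = 1))
    (hiso : ∀ x y : V, G.degree x = 0 → G.degree y = 0 → x = y) :
    ∃ (k : ℕ) (c : G.edgeSet → Fin k), IsDistEdgeColoring G c := by
  classical
  refine ⟨Fintype.card G.edgeSet, Fintype.equivFin G.edgeSet, ?_⟩
  intro φ hφ v
  have hfix : ∀ e : G.edgeSet, φ.mapEdgeSet e = e := by
    intro e
    exact (Fintype.equivFin G.edgeSet).injective (hφ e)
  have hfix' : ∀ (a b : V) (h : G.Adj a b), s(φ a, φ b) = s(a, b) := by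
    intro a b h
    have := congrArg Subtype.val (hfix ⟨s(a, b), (G.mem_edgeSet).mpr h⟩)
    rwa [mapEdgeSet_val] at this
  rcases Nat.lt_or_ge (G.degree v) 2 with hd | hd
  · rcases Nat.lt_or_ge (G.degree v) 1 with hd0 | hd1
    · -- degree 0
      have h0 : G.degree v = 0 := by omega
      have h1 : G.degree (φ v) = 0 := by rw [degree_congr φ v, h0]
      exact hiso (φ v) v h1 h0
    · -- degree 1
      obtain ⟨b, hb⟩ := (G.degree_pos_iff_exists_adj v).mp hd1
      rcases Sym2.eq_iff.mp (hfix' v b hb) with ⟨h1, -⟩ | ⟨h1, -⟩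
      · exact h1
      · exfalso
        have hdb : G.degree b = 1 := by
          have := degree_congr φ v
          rw [h1] at this
          omega
        exact hK2 v b hb ⟨by omega, hdb⟩
  · -- degree ≥ 2
    obtain ⟨b, hbmem, b', hbmem', hbb'⟩ :=
      Finset.one_lt_card.mp (by rw [card_neighborFinset_eq_degree]; omega :
        1 < (G.neighborFinset v).card)
    have hb : G.Adj v b := (G.mem_neighborFinset v b).mp hbmem
    have hb' : G.Adj v b' := (G.mem_neighborFinset v b').mp hbmem'
    rcases Sym2.eq_iff.mp (hfix' v b hb) with ⟨h1, -⟩ | ⟨h1, h2⟩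
    · exact h1
    · rcases Sym2.eq_iff.mp (hfix' v b' hb') with ⟨h1', -⟩ | ⟨h1', h2'⟩
      · exact h1'
      · exact absurd (h1 ▸ h1' : b = b') hbb'

lemma no_adj_of_empty (hV : IsEmpty V) (x y : V ⊕ V ⊕ PUnit.{u+1}) :
    ¬ (myc G).Adj x y := by
  intro h
  rcases vert_cases x with ⟨a, rfl⟩ | ⟨a, rfl⟩ | rfl
  · exact hV.false a
  · exact hV.false a
  · rcases vert_cases y with ⟨a, rfl⟩ | ⟨a, rfl⟩ | rfl
    · exact hV.false a
    · exact hV.false a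
    · exact adj_WW h

end Part4

end MycAux

open MycAux in
theorem distIndex_myc_le_of_not_star {V : Type u} [Fintype V] (G : SimpleGraph V)
    [DecidableRel G.Adj]
    (hK2 : ∀ x y : V, G.Adj x y → ¬(G.degree x = 1 ∧ G.degree y = 1))
    (hiso : ∀ x y : V, G.degree x = 0 → G.degree y = 0 → x = y)
    (hstar : ∀ m : ℕ, IsEmpty (G ≃g _root_.starGraph m)) :
    distIndex (myc G) ≤ distIndex G := by
  classical
  by_cases hV : Nonempty V
  · -- the set of distinguishing color counts for G is nonempty
    have hS : {k : ℕ | ∃ c : G.edgeSet → Fin k, IsDistEdgeColoring G c}.Nonempty := by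
      obtain ⟨k, c, hc⟩ := exists_dist hK2 hiso
      exact ⟨k, c, hc⟩
    have hmem : distIndex G ∈ {k : ℕ | ∃ c : G.edgeSet → Fin k, IsDistEdgeColoring G c} :=
      Nat.sInf_mem hS
    obtain ⟨c, hc⟩ := hmem
    -- G has an edge
    have hedge : ∃ a b, G.Adj a b := by
      by_contra hne
      push_neg at hne
      have hsub : Subsingleton V := by
        constructor
        intro a b
        refine hiso a b ?_ ?_ <;>
          · rw [← card_neighborSet_eq_degree]
            simp only [Fintype.card_eq_zero_iff]
            constructor
            rintro ⟨w, hw⟩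
            exact hne _ _ hw
      have hcard : Fintype.card V = 1 := by
        obtain ⟨v⟩ := hV
        exact Fintype.card_eq_one_iff.mpr ⟨v, fun w => Subsingleton.elim w v⟩
      have e : V ≃ Fin 1 := Fintype.equivFinOfCardEq hcard
      have iso : G ≃g _root_.starGraph 0 := by
        refine ⟨e, ?_⟩
        intro a b
        constructor
        · intro h
          exact absurd (congrArg e (Subsingleton.elim a b)) h.ne
        · intro h
          exact absurd h (hne a b)
      exact (hstar 0).false iso
    have hk : 0 < distIndex G := by
      rcases Nat.eq_zero_or_pos (distIndex G) with h | h
      swap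
      · exact h
      · exfalso
        obtain ⟨a, b, hab⟩ := hedge
        have := c ⟨s(a, b), (G.mem_edgeSet).mpr hab⟩
        rw [h] at this
        exact this.elim0
    refine Nat.sInf_le ?_
    exact ⟨mycColor G hk c, mycDist hK2 hstar hk c hc⟩
  · -- V is empty
    have hVE : IsEmpty V := not_nonempty_iff.mp hV
    refine Nat.sInf_le ?_
    have hempty : IsEmpty ((myc G).edgeSet) := by
      constructor
      rintro ⟨e, he⟩
      induction e with
      | _ x y => exact no_adj_of_empty hVE x y he
    refine ⟨fun e => (hempty.false e).elim, ?_⟩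
    intro φ _ v
    have hall : ∀ z : V ⊕ V ⊕ PUnit.{u+1}, z = W V := by
      intro z
      rcases vert_cases z with ⟨a, rfl⟩ | ⟨a, rfl⟩ | rfl
      · exact (hVE.false a).elim
      · exact (hVE.false a).elim
      · rfl
    rw [hall v, hall (φ (W V))]
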